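/- Let g, h : A* → A* be two marked morphisms with g ≠ h. Let u, v ∈ A* be words and s, r, q positive integers such that g(aˢ b u) = h(aˢ b u) and g(aʳ b v) = h(a^q b v). Then s = r = q. -/

import Mathlib

/-- The two-letter alphabet `A = {a, b}`. -/
inductive Ltr : Type
  | a : Ltr
  | b : Ltr
  deriving DecidableEq

/-- Apply a morphism (given by the images of the letters) to a word. -/
def mapp {α σ : Type*} (g : α → List σ) (w : List α) : List σ :=
  (w.map g).flatten

/-- The `n`-th power `tⁿ` of a word `t`. -/
def npow {σ : Type*} (t : List σ) (n : ℕ) : List σ :=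
  (List.replicate n t).flatten

/-- A binary morphism is periodic if all images of letters are powers of a common word. -/
def Periodic {σ : Type*} (g : Ltr → List σ) : Prop :=
  ∃ t : List σ, ∀ x : Ltr, ∃ n : ℕ, g x = npow t n

/-- The equality set `E(g,h)`. -/
def EqSet {σ : Type*} (g h : Ltr → List σ) : Set (List Ltr) :=
  {u | mapp g u = mapp h u}

/-- `u` is a minimal element of `E(g,h)`: nonempty, in `E(g,h)`, and not a product of two
nonempty elements of `E(g,h)`. -/
def MinEl {σ : Type*} (g h : Ltr → List σ) (u : List Ltr) : Prop :=
  u ≠ [] ∧ u ∈ EqSet g h ∧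
    ∀ v w : List Ltr, v ≠ [] → w ≠ [] → v ∈ EqSet g h → w ∈ EqSet g h → u ≠ v ++ w

/-- The submonoid of the free monoid generated by a set `S` of words. -/
def gen {α : Type*} (S : Set (List α)) : Set (List α) :=
  {u | ∃ l : List (List α), (∀ v ∈ l, v ∈ S) ∧ u = l.flatten}

/-- A binary morphism is marked if the images of the two letters are nonempty and
begin with different letters. -/
def Marked {σ : Type*} (g : Ltr → List σ) : Prop :=
  g Ltr.a ≠ [] ∧ g Ltr.b ≠ [] ∧ (g Ltr.a).head? ≠ (g Ltr.b).head?

open Classical in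
/-- Longest common prefix of two words. -/
noncomputable def lcp {σ : Type*} : List σ → List σ → List σ
  | x :: xs, y :: ys => if x = y then x :: lcp xs ys else []
  | _, _ => []

/-- `z_h`: the longest common prefix of `h(ab)` and `h(ba)`. -/
noncomputable def zh {σ : Type*} (h : Ltr → List σ) : List σ :=
  lcp (h Ltr.a ++ h Ltr.b) (h Ltr.b ++ h Ltr.a)

/-- `z̄_h`: the longest common suffix of `h(ab)` and `h(ba)`. -/
noncomputable def zbar {σ : Type*} (h : Ltr → List σ) : List σ :=
  (lcp (h Ltr.a ++ h Ltr.b).reverse ((h Ltr.b ++ h Ltr.a).reverse)).reverse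

/-- Componentwise concatenation in `Δ* × Δ*`. -/
def pprod {α : Type*} (p q : List α × List α) : List α × List α :=
  (p.1 ++ q.1, p.2 ++ q.2)

/-- The coincidence set `I(g,h) = {(u,v) | g(u) = h(v)}`. -/
def CoinSet {α σ : Type*} (g h : α → List σ) : Set (List α × List α) :=
  {p | mapp g p.1 = mapp h p.2}

/-- Minimal elements of the coincidence set: elements other than `(ε,ε)` that are not
a product of two elements of `I(g,h) \ {(ε,ε)}`. -/
def MinCoin {α σ : Type*} (g h : α → List σ) (p : List α × List α) : Prop :=
  p ≠ ([], []) ∧ p ∈ CoinSet g h ∧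
    ¬ ∃ q r : List α × List α, q ≠ ([], []) ∧ r ≠ ([], []) ∧
      q ∈ CoinSet g h ∧ r ∈ CoinSet g h ∧ p = pprod q r

/-- `(e,f)` is a block of `(g,h)`: nonempty words with `z_h·g(e) = h(f)·z_h`, minimal
with this property. -/
def MinBlock {σ : Type*} (g h : Ltr → List σ) (e f : List Ltr) : Prop :=
  e ≠ [] ∧ f ≠ [] ∧ zh h ++ mapp g e = mapp h f ++ zh h ∧
    ∀ u v : List Ltr, u <+: e → v <+: f →
      zh h ++ mapp g u = mapp h v ++ zh h → (u = [] ∧ v = []) ∨ (u = e ∧ v = f)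

/-- `e` is a nonempty word with `z_h·g(e) = h(e)·z_h`, minimal with this property. -/
def MinEqBlock {σ : Type*} (g h : Ltr → List σ) (e : List Ltr) : Prop :=
  e ≠ [] ∧ zh h ++ mapp g e = mapp h e ++ zh h ∧
    ∀ e₁ : List Ltr, e₁ <+: e → zh h ++ mapp g e₁ = mapp h e₁ ++ zh h →
      e₁ = [] ∨ e₁ = e

/-- The binary morphism sending `a ↦ x` and `b ↦ y`. -/
def two {σ : Type*} (x y : List σ) : Ltr → List σ
  | Ltr.a => x
  | Ltr.b => y

/-- A counterexample: the minimal generating set of `E(g,h)` has at least two elements,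
`g` is marked, `h` is not marked, `|g(a)| > |h(a)|` and `|g(b)| < |h(b)|`. -/
def Counterexample {σ : Type*} (g h : Ltr → List σ) : Prop :=
  (∃ α β : List Ltr, MinEl g h α ∧ MinEl g h β ∧ α ≠ β) ∧
  Marked g ∧ ¬ Marked h ∧
  (h Ltr.a).length < (g Ltr.a).length ∧ (g Ltr.b).length < (h Ltr.b).length

namespace St16

open List

lemma ltr_cases (l : Ltr) : l = Ltr.a ∨ l = Ltr.b := by cases l <;> simp

lemma mapp_nil (g : Ltr → List Ltr) : mapp g [] = [] := rfl

lemma mapp_cons (g : Ltr → List Ltr) (α : Ltr) (w : List Ltr) :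
    mapp g (α :: w) = g α ++ mapp g w := by simp [mapp]

lemma mapp_append (g : Ltr → List Ltr) (w1 w2 : List Ltr) :
    mapp g (w1 ++ w2) = mapp g w1 ++ mapp g w2 := by simp [mapp]

lemma mapp_single (g : Ltr → List Ltr) (α : Ltr) : mapp g [α] = g α := by
  simp [mapp]

section OneMorphism

variable {g : Ltr → List Ltr}

lemma letter_ne_nil (hga : g Ltr.a ≠ []) (hgb : g Ltr.b ≠ []) (α : Ltr) : g α ≠ [] := by
  cases α <;> assumption

lemma head_ne_of_ne (hg : (g Ltr.a).head? ≠ (g Ltr.b).head?) {α β : Ltr} (h : α ≠ β) :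
    (g α).head? ≠ (g β).head? := by
  cases α <;> cases β <;> first | exact absurd rfl h | exact hg | exact hg.symm

lemma mapp_eq_nil (hga : g Ltr.a ≠ []) (hgb : g Ltr.b ≠ []) {w : List Ltr}
    (h : mapp g w = []) : w = [] := by
  cases w with
  | nil => rfl
  | cons α t =>
    rw [mapp_cons] at h
    exact absurd (List.append_eq_nil_iff.mp h).1 (letter_ne_nil hga hgb α)

lemma head?_append_ne_nil {l l' : List Ltr} (h : l ≠ []) : (l ++ l').head? = l.head? := by
  cases l with
  | nil => exact absurd rfl h
  | cons c t => simp

lemma head?_mapp_cons (hga : g Ltr.a ≠ []) (hgb : g Ltr.b ≠ []) (α : Ltr) (w : List Ltr) :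
    (mapp g (α :: w)).head? = (g α).head? := by
  rw [mapp_cons, head?_append_ne_nil (letter_ne_nil hga hgb α)]

lemma head?_of_prefix {l1 l2 : List Ltr} (h : l1 <+: l2) (hne : l1 ≠ []) :
    l1.head? = l2.head? := by
  obtain ⟨t, rfl⟩ := h
  cases l1 with
  | nil => exact absurd rfl hne
  | cons c t' => simp

lemma mapp_prefix_mono {w w' : List Ltr} (h : w <+: w') :
    mapp g w <+: mapp g w' := by
  obtain ⟨t, rfl⟩ := h
  rw [mapp_append]
  exact List.prefix_append _ _

/-- marked parsing: if images are prefix-comparable then so are the words. -/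
lemma parse (hga : g Ltr.a ≠ []) (hgb : g Ltr.b ≠ [])
    (hg : (g Ltr.a).head? ≠ (g Ltr.b).head?) :
    ∀ {w w' : List Ltr}, mapp g w <+: mapp g w' → w <+: w' := by
  intro w
  induction w with
  | nil => intro w' _; exact List.nil_prefix
  | cons α t ih =>
    intro w' h
    cases w' with
    | nil =>
      rw [mapp_nil, List.prefix_nil] at h
      exact absurd (mapp_eq_nil hga hgb h) (by simp)
    | cons β t' =>
      have hαβ : α = β := by
        by_contra hne
        have h1 : (mapp g (α :: t)).head? = (mapp g (β :: t')).head? :=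
          head?_of_prefix h (by
            intro hh; exact absurd (mapp_eq_nil hga hgb hh) (by simp))
        rw [head?_mapp_cons hga hgb, head?_mapp_cons hga hgb] at h1
        exact head_ne_of_ne hg hne h1
      subst hαβ
      rw [mapp_cons, mapp_cons] at h
      have h2 : mapp g t <+: mapp g t' := (List.prefix_append_right_inj _).mp h
      exact (List.cons_prefix_cons).mpr ⟨rfl, ih h2⟩

lemma len_mapp (w : List Ltr) :
    (mapp g w).length
      = w.count Ltr.a * (g Ltr.a).length + w.count Ltr.b * (g Ltr.b).length := by
  induction w with
  | nil => simp [mapp_nil]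
  | cons α t ih =>
    rw [mapp_cons, List.length_append, ih]
    cases α <;> simp [List.count_cons] <;> ring

lemma prefix_eq_of_mapp_len (hga : g Ltr.a ≠ []) (hgb : g Ltr.b ≠ [])
    {w w' : List Ltr} (h : w <+: w')
    (hl : (mapp g w).length = (mapp g w').length) : w = w' := by
  obtain ⟨t, rfl⟩ := h
  rw [mapp_append, List.length_append] at hl
  have : mapp g t = [] := List.length_eq_zero_iff.mp (by omega)
  rw [mapp_eq_nil hga hgb this, List.append_nil]

lemma esplit : ∀ (w : List Ltr) (j : ℕ), j < (mapp g w).length →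
    ∃ wa α, wa ++ [α] <+: w ∧ (mapp g wa).length ≤ j ∧
      j < (mapp g wa).length + (g α).length := by
  intro w
  induction w with
  | nil => intro j hj; rw [mapp_nil] at hj; simp at hj
  | cons β t ih =>
    intro j hj
    by_cases hc : j < (g β).length
    · exact ⟨[], β, ⟨t, rfl⟩, by simp [mapp_nil], by simpa [mapp_nil] using hc⟩
    · push_neg at hc
      rw [mapp_cons, List.length_append] at hj
      obtain ⟨ta, α, h1, h2, h3⟩ := ih (j - (g β).length) (by omega)
      refine ⟨β :: ta, α, ?_, ?_, ?_⟩
      · exact (List.cons_prefix_cons).mpr ⟨rfl, h1⟩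
      · rw [mapp_cons, List.length_append]; omega
      · rw [mapp_cons, List.length_append]; omega

end OneMorphism

lemma firstdiff : ∀ (P Q : List Ltr), ¬ (P <+: Q) → P.length ≤ Q.length →
    ∃ j, j < P.length ∧ P.take j = Q.take j ∧ P[j]? ≠ Q[j]? := by
  intro P
  induction P with
  | nil => intro Q h _; exact absurd (List.nil_prefix) h
  | cons c P' ih =>
    intro Q hnp hlen
    cases Q with
    | nil => simp at hlen
    | cons d Q' =>
      by_cases hcd : c = d
      · subst hcd
        have hnp' : ¬ (P' <+: Q') := fun hp => hnp ((List.cons_prefix_cons).mpr ⟨rfl, hp⟩)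
        obtain ⟨j, h1, h2, h3⟩ := ih Q' hnp' (by simpa using hlen)
        exact ⟨j + 1, by simpa using h1, by simpa using h2, by simpa using h3⟩
      · exact ⟨0, by simp, by simp, by simpa using hcd⟩

lemma getin {l z : List Ltr} (h : l <+: z) {j : ℕ} (hj : j < l.length) :
    z[j]? = l[j]? := by
  obtain ⟨t, rfl⟩ := h
  rw [List.getElem?_append, if_pos hj]

lemma getlt {P Q : List Ltr} (h : P.take j = Q.take j) {k : ℕ} (hk : k < j) :
    P[k]? = Q[k]? := by
  have := congrArg (fun l => l[k]?) h
  simpa [List.getElem?_take, hk] using this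

lemma pretake {l z : List Ltr} (h : l <+: z) {j : ℕ} (hj : l.length ≤ j) :
    l <+: z.take j := by
  refine List.prefix_iff_eq_take.mpr ?_
  rw [List.take_take, min_eq_left hj]
  exact List.prefix_iff_eq_take.mp h

lemma prefix_eq_take_len {l z : List Ltr} (h : l <+: z) {j : ℕ} (hj : l.length = j) :
    l = z.take j := by
  subst hj; exact List.prefix_iff_eq_take.mp h


/-- Minimal coincidence block for the pair (g,h). -/
def MinB (g h : Ltr → List Ltr) (p : List Ltr × List Ltr) : Prop :=
  p.1 ≠ [] ∧ mapp g p.1 = mapp h p.2 ∧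
    ∀ t1 t2 : List Ltr, t1 <+: p.1 → t2 <+: p.2 → mapp g t1 = mapp h t2 →
      (t1 = [] ∧ t2 = []) ∨ (t1 = p.1 ∧ t2 = p.2)

section Pair

variable {g h : Ltr → List Ltr}
variable (hga : g Ltr.a ≠ []) (hgb : g Ltr.b ≠ []) (hgm : (g Ltr.a).head? ≠ (g Ltr.b).head?)
variable (hha : h Ltr.a ≠ []) (hhb : h Ltr.b ≠ []) (hhm : (h Ltr.a).head? ≠ (h Ltr.b).head?)
variable (HA : (g Ltr.a).head? = (h Ltr.a).head?)

include hga hgb hha hhb hgm hhm HA in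
/-- coincidences have equal first letters -/
lemma coin_heads {w1 w2 : List Ltr} (hC : mapp g w1 = mapp h w2) (hne : w1 ≠ []) :
    ∃ α t1 t2, w1 = α :: t1 ∧ w2 = α :: t2 := by
  obtain ⟨α, t1, rfl⟩ := List.exists_cons_of_ne_nil hne
  have hw2 : w2 ≠ [] := by
    intro hh2; rw [hh2, mapp_nil] at hC
    exact absurd (mapp_eq_nil hga hgb hC) (by simp)
  obtain ⟨β, t2, rfl⟩ := List.exists_cons_of_ne_nil hw2
  have hheads : (g α).head? = (h β).head? := by
    have := congrArg List.head? hC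
    rwa [head?_mapp_cons hga hgb, head?_mapp_cons hha hhb] at this
  have hAB : α = β := by
    by_contra hne'
    rcases ltr_cases α with rfl | rfl <;> rcases ltr_cases β with rfl | rfl
    · exact hne' rfl
    · exact hhm (HA ▸ hheads)
    · exact hgm (hheads.trans HA.symm).symm
    · exact hne' rfl
  exact ⟨α, t1, t2, rfl, hAB ▸ rfl⟩

set_option linter.unusedSectionVars false in
include hga hgb hha hhb in
lemma mex : ∀ n (w1 w2 : List Ltr), w1.length ≤ n → mapp g w1 = mapp h w2 → w1 ≠ [] →
    ∃ p1 p2, p1 <+: w1 ∧ p2 <+: w2 ∧ MinB g h (p1, p2) := by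
  intro n
  induction n with
  | zero =>
    intro w1 w2 hl _ hne
    exact absurd (List.length_eq_zero_iff.mp (Nat.le_zero.mp hl)) hne
  | succ n ih =>
    intro w1 w2 hl hC hne
    by_cases hEx : ∃ t1 t2 : List Ltr, t1 <+: w1 ∧ t2 <+: w2 ∧ mapp g t1 = mapp h t2 ∧
        t1 ≠ [] ∧ t1 ≠ w1
    · obtain ⟨t1, t2, ht1, ht2, htC, htne, htw⟩ := hEx
      have hlt : t1.length ≤ n := by
        have h1 := ht1.length_le
        have h2 : t1.length ≠ w1.length := fun hh =>
          htw (ht1.eq_of_length hh)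
        omega
      obtain ⟨p1, p2, hp1, hp2, hmin⟩ := ih t1 t2 hlt htC htne
      exact ⟨p1, p2, hp1.trans ht1, hp2.trans ht2, hmin⟩
    · refine ⟨w1, w2, List.prefix_refl _, List.prefix_refl _, hne, hC, ?_⟩
      intro t1 t2 ht1 ht2 htC
      by_cases h1 : t1 = []
      · subst h1
        rw [mapp_nil] at htC
        exact Or.inl ⟨rfl, mapp_eq_nil hha hhb htC.symm⟩
      · by_cases h2 : t1 = w1
        · subst h2
          refine Or.inr ⟨rfl, ?_⟩
          have : mapp h t2 = mapp h w2 := by rw [← htC, hC]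
          exact prefix_eq_of_mapp_len hha hhb ht2 (by rw [this])
        · exact absurd ⟨t1, t2, ht1, ht2, htC, h1, h2⟩ hEx

include hga hgb hha hhb in
lemma dec : ∀ n (w1 w2 : List Ltr), w1.length ≤ n → mapp g w1 = mapp h w2 →
    ∃ L : List (List Ltr × List Ltr), (∀ p ∈ L, MinB g h p) ∧
      (L.map Prod.fst).flatten = w1 ∧ (L.map Prod.snd).flatten = w2 := by
  intro n
  induction n with
  | zero =>
    intro w1 w2 hl hC
    have hw1 : w1 = [] := List.length_eq_zero_iff.mp (Nat.le_zero.mp hl)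
    subst hw1
    rw [mapp_nil] at hC
    exact ⟨[], by simp, by simp, by simp [mapp_eq_nil hha hhb hC.symm]⟩
  | succ n ih =>
    intro w1 w2 hl hC
    by_cases hne : w1 = []
    · subst hne
      rw [mapp_nil] at hC
      exact ⟨[], by simp, by simp, by simp [mapp_eq_nil hha hhb hC.symm]⟩
    · obtain ⟨p1, p2, hp1, hp2, hmin⟩ := mex hga hgb hha hhb w1.length w1 w2 le_rfl hC hne
      obtain ⟨t1, rfl⟩ := hp1
      obtain ⟨t2, rfl⟩ := hp2
      rw [mapp_append, mapp_append, hmin.2.1] at hC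
      have hC' : mapp g t1 = mapp h t2 := by
        exact (List.append_cancel_left hC)
      have hlt : t1.length ≤ n := by
        have : p1 ≠ [] := hmin.1
        have : 1 ≤ p1.length := by
          cases p1 with
          | nil => exact absurd rfl this
          | cons _ _ => simp
        rw [List.length_append] at hl
        omega
      obtain ⟨L, hL, hf, hs⟩ := ih t1 t2 hlt hC'
      refine ⟨(p1, p2) :: L, ?_, by simpa using hf, by simpa using hs⟩
      intro p hp
      rcases List.mem_cons.mp hp with hp' | hp'
      · simpa [hp'] using hmin
      · exact hL p hp'

/-- key technical lemma: the parse position below a bound is unique -/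
lemma key (hga : g Ltr.a ≠ []) (hgb : g Ltr.b ≠ []) (hgm : (g Ltr.a).head? ≠ (g Ltr.b).head?)
    {w wa wb : List Ltr} {α : Ltr} {j : ℕ}
    (h1 : wa ++ [α] <+: w) (h3 : j < (mapp g wa).length + (g α).length)
    (h4 : mapp g wb <+: mapp g w) (h5 : (mapp g wb).length ≤ j) (h6 : wa <+: wb) :
    wa = wb := by
  by_contra hne
  have hImg : mapp g (wa ++ [α]) <+: mapp g w := mapp_prefix_mono h1
  have hlen1 : (mapp g (wa ++ [α])).length = (mapp g wa).length + (g α).length := by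
    rw [mapp_append, List.length_append, mapp_single]
  rcases List.prefix_or_prefix_of_prefix hImg h4 with hc | hc
  · have := hc.length_le
    omega
  · have hwb : wb <+: wa ++ [α] := parse hga hgb hgm hc
    have hlb : wb.length ≤ wa.length + 1 := by simpa using hwb.length_le
    have hlb2 : wa.length ≤ wb.length := h6.length_le
    have hbne : wa.length ≠ wb.length := fun hh => hne (h6.eq_of_length hh)
    have : wb.length = (wa ++ [α]).length := by simp; omega
    have hwbeq : wb = wa ++ [α] := hwb.eq_of_length this
    rw [hwbeq] at h5
    omega

end Pair

lemma get_split (g : Ltr → List Ltr) {w wa : List Ltr} {α : Ltr} {j : ℕ}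
    (h1 : wa ++ [α] <+: w) (h2 : (mapp g wa).length ≤ j)
    (h3 : j < (mapp g wa).length + (g α).length) :
    (mapp g w)[j]? = (g α)[j - (mapp g wa).length]? := by
  have hl : mapp g (wa ++ [α]) = mapp g wa ++ g α := by rw [mapp_append, mapp_single]
  have hpre : mapp g (wa ++ [α]) <+: mapp g w := mapp_prefix_mono h1
  rw [getin hpre (by rw [hl, List.length_append]; omega), hl, List.getElem?_append,
    if_neg (by omega)]

section Pair2

variable {g h : Ltr → List Ltr}
variable (hga : g Ltr.a ≠ []) (hgb : g Ltr.b ≠ []) (hgm : (g Ltr.a).head? ≠ (g Ltr.b).head?)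
variable (hha : h Ltr.a ≠ []) (hhb : h Ltr.b ≠ []) (hhm : (h Ltr.a).head? ≠ (h Ltr.b).head?)

include hga hgb hgm hha hhb hhm in
lemma uniq' {p1 p2 q1 q2 : List Ltr} (hp : MinB g h (p1, p2)) (hq : MinB g h (q1, q2))
    (hhead : p1.head? = q1.head?)
    (hlen : (mapp g p1).length ≤ (mapp g q1).length) : p1 = q1 ∧ p2 = q2 := by
  obtain ⟨hpne, hpC, hpmin⟩ := hp
  obtain ⟨hqne, hqC, hqmin⟩ := hq
  dsimp only at hpne hpC hpmin hqne hqC hqmin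
  by_cases hpq : mapp g p1 <+: mapp g q1
  · have hp1q1 : p1 <+: q1 := parse hga hgb hgm hpq
    have hp2q2 : p2 <+: q2 := by
      refine parse hha hhb hhm ?_
      rw [← hpC, ← hqC]; exact hpq
    rcases hqmin p1 p2 hp1q1 hp2q2 hpC with ⟨h1, _⟩ | ⟨h1, h2⟩
    · exact absurd h1 hpne
    · exact ⟨h1, h2⟩
  · exfalso
    obtain ⟨j, hjP, hTake, hGet⟩ := firstdiff _ _ hpq hlen
    -- j ≠ 0
    have hj0 : j ≠ 0 := by
      intro hj0; subst hj0
      obtain ⟨α0, t0, rfl⟩ := List.exists_cons_of_ne_nil hpne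
      obtain ⟨β0, t0', rfl⟩ := List.exists_cons_of_ne_nil hqne
      have hαβ0 : α0 = β0 := by simpa using hhead
      subst hαβ0
      apply hGet
      rw [← List.head?_eq_getElem?, ← List.head?_eq_getElem?,
        head?_mapp_cons hga hgb, head?_mapp_cons hga hgb]
    have hjQ : j < (mapp g q1).length := lt_of_lt_of_le hjP hlen
    obtain ⟨pa, α, hpa1, hpa2, hpa3⟩ := esplit p1 j hjP
    obtain ⟨qa, β, hqa1, hqa2, hqa3⟩ := esplit q1 j hjQ
    have hjP2 : j < (mapp h p2).length := by rw [← hpC]; exact hjP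
    have hjQ2 : j < (mapp h q2).length := by rw [← hqC]; exact hjQ
    obtain ⟨pb, γ, hpb1, hpb2, hpb3⟩ := esplit p2 j hjP2
    obtain ⟨qb, δ, hqb1, hqb2, hqb3⟩ := esplit q2 j hjQ2
    -- g side: pa = qa
    have hgpaP : mapp g pa <+: mapp g p1 :=
      mapp_prefix_mono ((List.prefix_append pa [α]).trans hpa1)
    have hgqaQ : mapp g qa <+: mapp g q1 :=
      mapp_prefix_mono ((List.prefix_append qa [β]).trans hqa1)
    have hgpaT : mapp g pa <+: (mapp g p1).take j := pretake hgpaP hpa2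
    have hgqaT : mapp g qa <+: (mapp g p1).take j := by
      rw [hTake]; exact pretake hgqaQ hqa2
    have hgqaP : mapp g qa <+: mapp g p1 := hgqaT.trans (List.take_prefix _ _)
    have hgpaQ : mapp g pa <+: mapp g q1 := by
      refine (?_ : mapp g pa <+: (mapp g q1).take j).trans (List.take_prefix _ _)
      rw [← hTake]; exact hgpaT
    have hpaqa : pa = qa := by
      rcases List.prefix_or_prefix_of_prefix hgpaT hgqaT with hc | hc
      · exact key hga hgb hgm hpa1 hpa3 hgqaP hqa2 (parse hga hgb hgm hc)
      · exact (key hga hgb hgm hqa1 hqa3 hgpaQ hpa2 (parse hga hgb hgm hc)).symm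
    -- h side: pb = qb
    have hhpbP : mapp h pb <+: mapp h p2 :=
      mapp_prefix_mono ((List.prefix_append pb [γ]).trans hpb1)
    have hhqbQ : mapp h qb <+: mapp h q2 :=
      mapp_prefix_mono ((List.prefix_append qb [δ]).trans hqb1)
    have hTake2 : (mapp h p2).take j = (mapp h q2).take j := by
      rw [← hpC, ← hqC]; exact hTake
    have hhpbT : mapp h pb <+: (mapp h p2).take j := pretake hhpbP hpb2
    have hhqbT : mapp h qb <+: (mapp h p2).take j := by
      rw [hTake2]; exact pretake hhqbQ hqb2
    have hhqbP : mapp h qb <+: mapp h p2 := hhqbT.trans (List.take_prefix _ _)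
    have hhpbQ : mapp h pb <+: mapp h q2 := by
      refine (?_ : mapp h pb <+: (mapp h q2).take j).trans (List.take_prefix _ _)
      rw [← hTake2]; exact hhpbT
    have hpbqb : pb = qb := by
      rcases List.prefix_or_prefix_of_prefix hhpbT hhqbT with hc | hc
      · exact key hha hhb hhm hpb1 hpb3 hhqbP hqb2 (parse hha hhb hhm hc)
      · exact (key hha hhb hhm hqb1 hqb3 hhpbQ hpb2 (parse hha hhb hhm hc)).symm
    -- letters must differ on both sides, hence j is a sync point
    have hja : j = (mapp g pa).length := by
      by_cases hab : α = β
      · exfalso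
        apply hGet
        rw [get_split g hpa1 hpa2 hpa3, get_split g hqa1 hqa2 hqa3, hpaqa, hab]
      · by_contra hne
        have hlt : (mapp g pa).length < j := by omega
        set i := (mapp g pa).length with hi
        have e1 : (mapp g p1)[i]? = (g α)[0]? := by
          rw [get_split g hpa1 le_rfl (by
            have := List.length_pos_iff.mpr (letter_ne_nil hga hgb α); omega)]
          simp
        have e2 : (mapp g q1)[i]? = (g β)[0]? := by
          rw [get_split g hqa1 (by rw [← hpaqa]) (by
            rw [← hpaqa]
            have := List.length_pos_iff.mpr (letter_ne_nil hga hgb β); omega)]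
          rw [← hpaqa]
          simp [hi]
        have e3 : (mapp g p1)[i]? = (mapp g q1)[i]? := getlt hTake hlt
        rw [e1, e2, ← List.head?_eq_getElem?, ← List.head?_eq_getElem?] at e3
        exact head_ne_of_ne hgm hab e3
    have hjb : j = (mapp h pb).length := by
      by_cases hcd : γ = δ
      · exfalso
        apply hGet
        rw [hpC, hqC]
        rw [get_split h hpb1 hpb2 hpb3, get_split h hqb1 hqb2 hqb3, hpbqb, hcd]
      · by_contra hne
        have hlt : (mapp h pb).length < j := by omega
        set i := (mapp h pb).length with hi
        have e1 : (mapp h p2)[i]? = (h γ)[0]? := by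
          rw [get_split h hpb1 le_rfl (by
            have := List.length_pos_iff.mpr (letter_ne_nil hha hhb γ); omega)]
          simp
        have e2 : (mapp h q2)[i]? = (h δ)[0]? := by
          rw [get_split h hqb1 (by rw [← hpbqb]) (by
            rw [← hpbqb]
            have := List.length_pos_iff.mpr (letter_ne_nil hha hhb δ); omega)]
          rw [← hpbqb]
          simp [hi]
        have e3 : (mapp h p2)[i]? = (mapp h q2)[i]? := by
          rw [hpC, hqC] at hTake
          exact getlt hTake hlt
        rw [e1, e2, ← List.head?_eq_getElem?, ← List.head?_eq_getElem?] at e3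
        exact head_ne_of_ne hhm hcd e3
    -- (pa, pb) is an internal sync point: contradiction with minimality
    have hCab : mapp g pa = mapp h pb := by
      have e1 : mapp g pa = (mapp g p1).take j := prefix_eq_take_len hgpaP hja.symm
      have e2 : mapp h pb = (mapp h p2).take j := prefix_eq_take_len hhpbP hjb.symm
      rw [e1, e2, hpC]
    rcases hpmin pa pb ((List.prefix_append pa [α]).trans hpa1)
        ((List.prefix_append pb [γ]).trans hpb1) hCab with ⟨h1, _⟩ | ⟨h1, _⟩
    · rw [h1] at hja; rw [mapp_nil] at hja; simp at hja; exact hj0 hja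
    · rw [h1] at hja; omega

include hga hgb hgm hha hhb hhm in
lemma uniq {p q : List Ltr × List Ltr} (hp : MinB g h p) (hq : MinB g h q)
    (hhead : p.1.head? = q.1.head?) : p = q := by
  obtain ⟨p1, p2⟩ := p
  obtain ⟨q1, q2⟩ := q
  rcases le_total (mapp g p1).length (mapp g q1).length with hl | hl
  · obtain ⟨h1, h2⟩ := uniq' hga hgb hgm hha hhb hhm hp hq hhead hl
    simp [h1, h2]
  · obtain ⟨h1, h2⟩ := uniq' hga hgb hgm hha hhb hhm hq hp hhead.symm hl
    simp [h1, h2]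

end Pair2

lemma counts {Ba Bb : List Ltr × List Ltr} (hne : Ba ≠ Bb)
    (f : List Ltr × List Ltr → List Ltr) (l : Ltr) :
    ∀ L : List (List Ltr × List Ltr), (∀ p ∈ L, p = Ba ∨ p = Bb) →
      ((L.map f).flatten).count l
        = L.count Ba * (f Ba).count l + L.count Bb * (f Bb).count l := by
  intro L
  induction L with
  | nil => intro _; simp
  | cons p L' ih =>
    intro hall
    have hp := hall p (List.mem_cons_self)
    have hall' : ∀ p ∈ L', p = Ba ∨ p = Bb := fun p' hp' => hall p' (List.mem_cons_of_mem _ hp')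
    have hne' : Bb ≠ Ba := hne.symm
    rcases hp with rfl | rfl
    · simp [List.count_append, ih hall', List.count_cons, hne, hne']
      ring
    · simp [List.count_append, ih hall', List.count_cons, hne, hne']
      ring

lemma arith {t m t' m' c1a c1b c2a c2b d1a d1b d2a d2b r q va : ℕ}
    (H1 : t*c1a + m*d1a = t*c2a + m*d2a)
    (H2 : t*c1b + m*d1b = t*c2b + m*d2b)
    (H3 : t'*c1a + m'*d1a = r + va)
    (H4 : t'*c2a + m'*d2a = q + va)
    (H5 : t'*c1b + m'*d1b = t'*c2b + m'*d2b)
    (H6 : c1b = 0) (H7 : 1 ≤ c2b) (H8 : 1 ≤ t) (H9 : 1 ≤ t') : r = q := by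
  subst H6
  have h2 : (m:ℤ)*d1b = t*c2b + m*d2b := by exact_mod_cast by simpa using H2
  have h5 : (m':ℤ)*d1b = t'*c2b + m'*d2b := by exact_mod_cast by simpa using H5
  have e3 : ((m':ℤ)*t - m*t') * c2b = 0 := by linear_combination (m:ℤ)*h5 - (m':ℤ)*h2
  have hc2b : (c2b:ℤ) ≠ 0 := by
    have : c2b ≠ 0 := by omega
    exact_mod_cast this
  have e4 : (m':ℤ)*t = m*t' := by
    rcases mul_eq_zero.mp e3 with hz | hz
    · linarith [sub_eq_zero.mp hz]
    · exact absurd hz hc2b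
  have h1 : (t:ℤ)*c1a + m*d1a = t*c2a + m*d2a := by exact_mod_cast H1
  have h3 : (t':ℤ)*c1a + m'*d1a = r + va := by exact_mod_cast H3
  have h4 : (t':ℤ)*c2a + m'*d2a = q + va := by exact_mod_cast H4
  have e5 : (t:ℤ) * ((r:ℤ) - q) = 0 := by
    linear_combination (-(t:ℤ))*h3 + (t:ℤ)*h4 + (t':ℤ)*h1 + ((d1a:ℤ) - d2a)*e4
  have ht : (t:ℤ) ≠ 0 := by
    have : t ≠ 0 := by omega
    exact_mod_cast this
  rcases mul_eq_zero.mp e5 with hz | hz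
  · exact absurd hz ht
  · have : (r:ℤ) = q := by linarith [sub_eq_zero.mp hz]
    exact_mod_cast this

lemma repsplit : ∀ (k s1 : ℕ) (rest u1 : List Ltr),
    List.replicate k Ltr.a ++ rest = List.replicate s1 Ltr.a ++ Ltr.b :: u1 →
    k ≤ s1 ∧ rest = List.replicate (s1 - k) Ltr.a ++ Ltr.b :: u1 := by
  intro k
  induction k with
  | zero => intro s1 rest u1 hh; simpa using hh
  | succ k ih =>
    intro s1 rest u1 hh
    cases s1 with
    | zero =>
      rw [List.replicate_succ] at hh
      simp at hh
    | succ s1 =>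
      rw [List.replicate_succ, List.replicate_succ] at hh
      simp only [List.cons_append, List.cons.injEq] at hh
      obtain ⟨i1, i2⟩ := ih s1 rest u1 hh.2
      exact ⟨by omega, by simpa [Nat.succ_sub_succ] using i2⟩

lemma rep_b_eq {s r : ℕ} {τ τ' : List Ltr}
    (hh : List.replicate s Ltr.a ++ Ltr.b :: τ = List.replicate r Ltr.a ++ Ltr.b :: τ') :
    s = r := by
  obtain ⟨h1, h2⟩ := repsplit s r (Ltr.b :: τ) τ' hh
  rcases Nat.eq_or_lt_of_le h1 with he | hlt
  · exact he
  · exfalso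
    have : r - s = (r - s - 1) + 1 := by omega
    rw [this, List.replicate_succ] at h2
    simp at h2

lemma shape : ∀ (n : ℕ) (c w : List Ltr), c <+: List.replicate n Ltr.a ++ Ltr.b :: w →
    (Ltr.b ∉ c ∧ c = List.replicate c.length Ltr.a ∧ c.length ≤ n) ∨
      ∃ τ, c = List.replicate n Ltr.a ++ Ltr.b :: τ := by
  intro n
  induction n with
  | zero =>
    intro c w hc
    cases c with
    | nil => exact Or.inl ⟨by simp, by simp, by simp⟩
    | cons e t =>
      simp only [List.replicate_zero, List.nil_append] at hc
      rw [List.cons_prefix_cons] at hc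
      obtain ⟨rfl, ht⟩ := hc
      obtain ⟨τ, rfl⟩ := ht
      exact Or.inr ⟨t, by simp⟩
  | succ n ih =>
    intro c w hc
    rw [List.replicate_succ, List.cons_append] at hc
    cases c with
    | nil => exact Or.inl ⟨by simp, by simp, by simp⟩
    | cons e t =>
      rw [List.cons_prefix_cons] at hc
      obtain ⟨rfl, ht⟩ := hc
      rcases ih t w ht with ⟨hb, hrep, hlen⟩ | ⟨τ, rfl⟩
      · refine Or.inl ⟨?_, ?_, by simpa using Nat.succ_le_succ hlen⟩
        · simp only [List.mem_cons, not_or]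
          exact ⟨by simp, hb⟩
        · conv_lhs => rw [hrep]
          simp [List.replicate_succ]
      · exact Or.inr ⟨τ, by simp [List.replicate_succ]⟩

lemma count_aab (s : ℕ) (u : List Ltr) :
    (List.replicate s Ltr.a ++ Ltr.b :: u).count Ltr.a = s + u.count Ltr.a := by
  simp [List.count_append, List.count_replicate, List.count_cons]

lemma count_bab (s : ℕ) (u : List Ltr) :
    (List.replicate s Ltr.a ++ Ltr.b :: u).count Ltr.b = u.count Ltr.b + 1 := by
  simp [List.count_append, List.count_replicate, List.count_cons]

lemma pure2 {k k2 : ℕ} {Ba : List Ltr × List Ltr}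
    (hBa : Ba = (List.replicate k Ltr.a, List.replicate k2 Ltr.a)) :
    ∀ (L : List (List Ltr × List Ltr)),
      (∀ p ∈ L, p = Ba ∨ (p.1.head? = some Ltr.b ∧ p.2.head? = some Ltr.b)) →
      ∀ (s1 s2 : ℕ) (u1 u2 : List Ltr),
        (L.map Prod.fst).flatten = List.replicate s1 Ltr.a ++ Ltr.b :: u1 →
        (L.map Prod.snd).flatten = List.replicate s2 Ltr.a ++ Ltr.b :: u2 →
        ∃ i, s1 = i * k ∧ s2 = i * k2 := by
  intro L
  induction L with
  | nil =>
    intro _ s1 s2 u1 u2 h1 _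
    exfalso
    simp only [List.map_nil, List.flatten_nil] at h1
    exact absurd h1.symm (by simp)
  | cons p L' ih =>
    intro hall s1 s2 u1 u2 h1 h2
    simp only [List.map_cons, List.flatten_cons] at h1 h2
    have hall' : ∀ p ∈ L', p = Ba ∨ (p.1.head? = some Ltr.b ∧ p.2.head? = some Ltr.b) :=
      fun p' hp' => hall p' (List.mem_cons_of_mem _ hp')
    rcases hall p (List.mem_cons_self) with rfl | ⟨hb1, hb2⟩
    · rw [hBa] at h1 h2
      simp only at h1 h2
      obtain ⟨hk1, hr1⟩ := repsplit k s1 _ u1 h1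
      obtain ⟨hk2, hr2⟩ := repsplit k2 s2 _ u2 h2
      obtain ⟨i, hi1, hi2⟩ := ih hall' (s1 - k) (s2 - k2) u1 u2 hr1 hr2
      refine ⟨i + 1, ?_, ?_⟩
      · have := (Nat.sub_eq_iff_eq_add hk1).mp hi1
        rw [this]; ring
      · have := (Nat.sub_eq_iff_eq_add hk2).mp hi2
        rw [this]; ring
    · have hs1 : s1 = 0 := by
        by_contra hs
        have : p.1.head? = some Ltr.a := by
          have hp1ne : p.1 ≠ [] := by
            intro hnil; rw [hnil] at hb1; simp at hb1
          have := head?_of_prefix (⟨_, h1⟩ : p.1 <+: _) hp1ne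
          rw [this]
          have : s1 = (s1 - 1) + 1 := by omega
          rw [this, List.replicate_succ]
          simp
        rw [this] at hb1
        simp at hb1
      have hs2 : s2 = 0 := by
        by_contra hs
        have : p.2.head? = some Ltr.a := by
          have hp2ne : p.2 ≠ [] := by
            intro hnil; rw [hnil] at hb2; simp at hb2
          have := head?_of_prefix (⟨_, h2⟩ : p.2 <+: _) hp2ne
          rw [this]
          have : s2 = (s2 - 1) + 1 := by omega
          rw [this, List.replicate_succ]
          simp
        rw [this] at hb2
        simp at hb2
      exact ⟨0, by simp [hs1], by simp [hs2]⟩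

section NeqLen

variable {g h : Ltr → List Ltr}

lemma neqlen (hga : g Ltr.a ≠ []) (hgb : g Ltr.b ≠ []) (hha : h Ltr.a ≠ [])
    (hhb : h Ltr.b ≠ []) (hgh : g ≠ h) {s : ℕ} (hs : 0 < s) {u : List Ltr}
    (e1 : mapp g (List.replicate s Ltr.a ++ Ltr.b :: u)
        = mapp h (List.replicate s Ltr.a ++ Ltr.b :: u)) :
    (g Ltr.a).length ≠ (h Ltr.a).length := by
  intro heq
  have hsp : List.replicate s Ltr.a ++ Ltr.b :: u
      = Ltr.a :: (List.replicate (s-1) Ltr.a ++ Ltr.b :: u) := by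
    conv_lhs => rw [show s = (s-1)+1 by omega, List.replicate_succ]
    rw [List.cons_append]
  have e1' := e1
  rw [hsp, mapp_cons, mapp_cons] at e1'
  have hxX : g Ltr.a = h Ltr.a := by
    rcases List.prefix_or_prefix_of_prefix
        (e1' ▸ List.prefix_append (g Ltr.a) (mapp g (List.replicate (s-1) Ltr.a ++ Ltr.b :: u)))
        (List.prefix_append (h Ltr.a) (mapp h (List.replicate (s-1) Ltr.a ++ Ltr.b :: u)))
      with hc | hc
    · exact hc.eq_of_length heq
    · exact (hc.eq_of_length heq.symm).symm
  have hrep : ∀ n, mapp g (List.replicate n Ltr.a) = mapp h (List.replicate n Ltr.a) := by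
    intro n
    induction n with
    | zero => simp [mapp_nil]
    | succ n ih => rw [List.replicate_succ, mapp_cons, mapp_cons, hxX, ih]
  have e2' := e1
  rw [mapp_append, mapp_append, mapp_cons, mapp_cons, hrep s] at e2'
  have hcanc : g Ltr.b ++ mapp g u = h Ltr.b ++ mapp h u := List.append_cancel_left e2'
  have hgend : g Ltr.b = h Ltr.b → False := by
    intro hyY
    apply hgh
    funext l
    cases l
    · exact hxX
    · exact hyY
  rcases List.append_eq_append_iff.mp hcanc with ⟨a', ha1, ha2⟩ | ⟨c', hc1, hc2⟩
  · have hl := congrArg List.length ha2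
    rw [len_mapp, List.length_append, len_mapp] at hl
    have hb' := congrArg List.length ha1
    rw [List.length_append] at hb'
    have ha0 : a'.length = 0 := by
      rw [heq, hb', Nat.mul_add] at hl
      omega
    apply hgend
    rw [ha1, List.length_eq_zero_iff.mp ha0, List.append_nil]
  · have hl := congrArg List.length hc2
    rw [len_mapp, List.length_append, len_mapp] at hl
    have hb' := congrArg List.length hc1
    rw [List.length_append] at hb'
    have hc0 : c'.length = 0 := by
      rw [heq, hb', Nat.mul_add] at hl
      omega
    apply hgend
    rw [hc1, List.length_eq_zero_iff.mp hc0, List.append_nil]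

end NeqLen

end St16


theorem stmt_16' (g h : Ltr → List Ltr)
    (hga : g Ltr.a ≠ []) (hgb : g Ltr.b ≠ []) (hgm : (g Ltr.a).head? ≠ (g Ltr.b).head?)
    (hha : h Ltr.a ≠ []) (hhb : h Ltr.b ≠ []) (hhm : (h Ltr.a).head? ≠ (h Ltr.b).head?)
    (hgh : g ≠ h)
    (u v : List Ltr) (s r q : ℕ) (hs : 0 < s) (hr : 0 < r) (hq : 0 < q)
    (e1 : mapp g (List.replicate s Ltr.a ++ Ltr.b :: u) =
          mapp h (List.replicate s Ltr.a ++ Ltr.b :: u))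
    (e2 : mapp g (List.replicate r Ltr.a ++ Ltr.b :: v) =
          mapp h (List.replicate q Ltr.a ++ Ltr.b :: v)) :
    s = r ∧ r = q := by
  classical
  have hsplit : ∀ (n : ℕ) (w : List Ltr), 0 < n →
      List.replicate n Ltr.a ++ Ltr.b :: w
        = Ltr.a :: (List.replicate (n-1) Ltr.a ++ Ltr.b :: w) := by
    intro n w hn
    conv_lhs => rw [show n = (n-1)+1 by omega, List.replicate_succ]
    rw [List.cons_append]
  have HA : (g Ltr.a).head? = (h Ltr.a).head? := by
    have hc := congrArg List.head? e1
    rwa [hsplit s u hs, St16.head?_mapp_cons hga hgb, St16.head?_mapp_cons hha hhb] at hc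
  have hNE : (g Ltr.a).length ≠ (h Ltr.a).length :=
    St16.neqlen hga hgb hha hhb hgh hs e1
  obtain ⟨L1, hL1, hf1, hs1⟩ := St16.dec hga hgb hha hhb _ _ _ le_rfl e1
  obtain ⟨L2, hL2, hf2, hs2⟩ := St16.dec hga hgb hha hhb _ _ _ le_rfl e2
  cases L1 with
  | nil =>
    exfalso
    simp only [List.map_nil, List.flatten_nil] at hf1
    exact absurd hf1.symm (by simp)
  | cons Ba L1' =>
  cases L2 with
  | nil =>
    exfalso
    simp only [List.map_nil, List.flatten_nil] at hf2
    exact absurd hf2.symm (by simp)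
  | cons Bc L2' =>
  have hBaM : St16.MinB g h Ba := hL1 Ba (List.mem_cons_self)
  have hBcM : St16.MinB g h Bc := hL2 Bc (List.mem_cons_self)
  simp only [List.map_cons, List.flatten_cons] at hf1 hs1 hf2 hs2
  have hpre1 : Ba.1 <+: List.replicate s Ltr.a ++ Ltr.b :: u := ⟨_, hf1⟩
  have hpre2 : Ba.2 <+: List.replicate s Ltr.a ++ Ltr.b :: u := ⟨_, hs1⟩
  have hBah : Ba.1.head? = some Ltr.a := by
    rw [St16.head?_of_prefix hpre1 hBaM.1, hsplit s u hs]
    simp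
  have hBch : Bc.1.head? = some Ltr.a := by
    rw [St16.head?_of_prefix (⟨_, hf2⟩ : Bc.1 <+: _) hBcM.1, hsplit r v hr]
    simp
  have hBc : Bc = Ba :=
    St16.uniq hga hgb hgm hha hhb hhm hBcM hBaM (hBch.trans hBah.symm)
  subst hBc
  have hpre3 : Bc.1 <+: List.replicate r Ltr.a ++ Ltr.b :: v := ⟨_, hf2⟩
  have hpre4 : Bc.2 <+: List.replicate q Ltr.a ++ Ltr.b :: v := ⟨_, hs2⟩
  have S1 := St16.shape s Bc.1 u hpre1
  have S1' := St16.shape r Bc.1 v hpre3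
  have S2 := St16.shape s Bc.2 u hpre2
  have S2' := St16.shape q Bc.2 v hpre4
  -- choose the b-block (or junk)
  obtain ⟨Bb, hBaBb, hCL⟩ : ∃ Bb, Bc ≠ Bb ∧
      ∀ p, (p ∈ Bc :: L1' ∨ p ∈ Bc :: L2') → p = Bc ∨ p = Bb := by
    by_cases hEx : ∃ p, (p ∈ Bc :: L1' ∨ p ∈ Bc :: L2') ∧ p.1.head? = some Ltr.b
    · obtain ⟨Bb, hmem, hhd⟩ := hEx
      have hBbM : St16.MinB g h Bb := by
        rcases hmem with hm | hm
        · exact hL1 _ hm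
        · exact hL2 _ hm
      refine ⟨Bb, ?_, ?_⟩
      · intro hEq
        rw [hEq, hhd] at hBah
        simp at hBah
      · intro p hp
        have hpM : St16.MinB g h p := by
          rcases hp with hm | hm
          · exact hL1 _ hm
          · exact hL2 _ hm
        obtain ⟨e, t, hpt⟩ := List.exists_cons_of_ne_nil hpM.1
        rcases St16.ltr_cases e with rfl | rfl
        · exact Or.inl (St16.uniq hga hgb hgm hha hhb hhm hpM hBaM
            (by rw [hpt, hBah]; rfl))
        · exact Or.inr (St16.uniq hga hgb hgm hha hhb hhm hpM hBbM
            (by rw [hpt, hhd]; rfl))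
    · refine ⟨([], []), ?_, ?_⟩
      · intro hEq
        have := hBaM.1
        rw [hEq] at this
        exact this rfl
      · intro p hp
        have hpM : St16.MinB g h p := by
          rcases hp with hm | hm
          · exact hL1 _ hm
          · exact hL2 _ hm
        obtain ⟨e, t, hpt⟩ := List.exists_cons_of_ne_nil hpM.1
        rcases St16.ltr_cases e with rfl | rfl
        · exact Or.inl (St16.uniq hga hgb hgm hha hhb hhm hpM hBaM
            (by rw [hpt, hBah]; rfl))
        · exact absurd ⟨p, hp, by rw [hpt]; rfl⟩ hEx
  have hallA : ∀ p ∈ Bc :: L1', p = Bc ∨ p = Bb := fun p hp => hCL p (Or.inl hp)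
  have hallB : ∀ p ∈ Bc :: L2', p = Bc ∨ p = Bb := fun p hp => hCL p (Or.inr hp)
  have hf1' : (((Bc :: L1').map Prod.fst).flatten) = List.replicate s Ltr.a ++ Ltr.b :: u := by
    simp only [List.map_cons, List.flatten_cons]; exact hf1
  have hs1' : (((Bc :: L1').map Prod.snd).flatten) = List.replicate s Ltr.a ++ Ltr.b :: u := by
    simp only [List.map_cons, List.flatten_cons]; exact hs1
  have hf2' : (((Bc :: L2').map Prod.fst).flatten) = List.replicate r Ltr.a ++ Ltr.b :: v := by
    simp only [List.map_cons, List.flatten_cons]; exact hf2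
  have hs2' : (((Bc :: L2').map Prod.snd).flatten) = List.replicate q Ltr.a ++ Ltr.b :: v := by
    simp only [List.map_cons, List.flatten_cons]; exact hs2
  have CA1 := St16.counts hBaBb Prod.fst Ltr.a _ hallA
  have CA2 := St16.counts hBaBb Prod.snd Ltr.a _ hallA
  have CB1 := St16.counts hBaBb Prod.fst Ltr.b _ hallA
  have CB2 := St16.counts hBaBb Prod.snd Ltr.b _ hallA
  have DA1 := St16.counts hBaBb Prod.fst Ltr.a _ hallB
  have DA2 := St16.counts hBaBb Prod.snd Ltr.a _ hallB
  have DB1 := St16.counts hBaBb Prod.fst Ltr.b _ hallB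
  have DB2 := St16.counts hBaBb Prod.snd Ltr.b _ hallB
  rw [hf1', St16.count_aab] at CA1
  rw [hs1', St16.count_aab] at CA2
  rw [hf1', St16.count_bab] at CB1
  rw [hs1', St16.count_bab] at CB2
  rw [hf2', St16.count_aab] at DA1
  rw [hs2', St16.count_aab] at DA2
  rw [hf2', St16.count_bab] at DB1
  rw [hs2', St16.count_bab] at DB2
  have ht1 : 1 ≤ (Bc :: L1').count Bc :=
    List.count_pos_iff.mpr (List.mem_cons_self)
  have ht2 : 1 ≤ (Bc :: L2').count Bc :=
    List.count_pos_iff.mpr (List.mem_cons_self)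
  by_cases hb1 : Ltr.b ∈ Bc.1
  · -- first component contains b: s = r
    have hsr : s = r := by
      rcases S1 with ⟨hno, _, _⟩ | ⟨τ1, hτ1⟩
      · exact absurd hb1 hno
      rcases S1' with ⟨hno, _, _⟩ | ⟨τ2, hτ2⟩
      · exact absurd hb1 hno
      exact St16.rep_b_eq (hτ1.symm.trans hτ2)
    by_cases hb2 : Ltr.b ∈ Bc.2
    · -- both contain b: s = q as well
      have hsq : s = q := by
        rcases S2 with ⟨hno, _, _⟩ | ⟨τ1, hτ1⟩
        · exact absurd hb2 hno
        rcases S2' with ⟨hno, _, _⟩ | ⟨τ2, hτ2⟩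
        · exact absurd hb2 hno
        exact St16.rep_b_eq (hτ1.symm.trans hτ2)
      exact ⟨hsr, by omega⟩
    · -- mirror counting: q = r
      have hqr : q = r :=
        St16.arith (CA2.symm.trans CA1) (CB2.symm.trans CB1) DA2.symm DA1.symm
          (DB2.symm.trans DB1) (List.count_eq_zero.mpr hb2)
          (List.count_pos_iff.mpr hb1) ht1 ht2
      exact ⟨hsr, by omega⟩
  · by_cases hb2 : Ltr.b ∈ Bc.2
    · -- second component contains b: s = q, then counting: r = q
      have hsq : s = q := by
        rcases S2 with ⟨hno, _, _⟩ | ⟨τ1, hτ1⟩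
        · exact absurd hb2 hno
        rcases S2' with ⟨hno, _, _⟩ | ⟨τ2, hτ2⟩
        · exact absurd hb2 hno
        exact St16.rep_b_eq (hτ1.symm.trans hτ2)
      have hrq : r = q :=
        St16.arith (CA1.symm.trans CA2) (CB1.symm.trans CB2) DA1.symm DA2.symm
          (DB1.symm.trans DB2) (List.count_eq_zero.mpr hb1)
          (List.count_pos_iff.mpr hb2) ht1 ht2
      exact ⟨by omega, hrq⟩
    · -- both pure: contradiction
      exfalso
      rcases S1 with ⟨_, hrep1, _⟩ | ⟨τ, hτ⟩
      swap
      · exact hb1 (by rw [hτ]; simp)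
      rcases S2 with ⟨_, hrep2, _⟩ | ⟨τ, hτ⟩
      swap
      · exact hb2 (by rw [hτ]; simp)
      have hBaEq : Bc = (List.replicate Bc.1.length Ltr.a, List.replicate Bc.2.length Ltr.a) :=
        Prod.ext_iff.mpr ⟨hrep1, hrep2⟩
      have hall2 : ∀ p ∈ Bc :: L1', p = Bc ∨
          (p.1.head? = some Ltr.b ∧ p.2.head? = some Ltr.b) := by
        intro p hp
        have hpM : St16.MinB g h p := hL1 p hp
        obtain ⟨α, t1, t2, hp1, hp2⟩ :=
          St16.coin_heads hga hgb hgm hha hhb hhm HA hpM.2.1 hpM.1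
        rcases St16.ltr_cases α with rfl | rfl
        · exact Or.inl (St16.uniq hga hgb hgm hha hhb hhm hpM hBaM
            (by rw [hp1, hBah]; rfl))
        · exact Or.inr ⟨by rw [hp1]; rfl, by rw [hp2]; rfl⟩
      obtain ⟨i, hi1, hi2⟩ := St16.pure2 hBaEq (Bc :: L1') hall2 s s u u hf1' hs1'
      have hipos : 0 < i := by
        rcases Nat.eq_zero_or_pos i with rfl | hp
        · omega
        · exact hp
      have hkk : Bc.1.length = Bc.2.length :=
        Nat.eq_of_mul_eq_mul_left hipos (hi1.symm.trans hi2)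
      have hk1 : 0 < Bc.1.length := List.length_pos_iff.mpr hBaM.1
      have himg := hBaM.2.1
      have hle := congrArg List.length himg
      rw [St16.len_mapp, St16.len_mapp] at hle
      rw [hrep1, hrep2] at hle
      simp [List.count_replicate] at hle
      apply hNE
      rw [hkk] at hle
      exact Nat.eq_of_mul_eq_mul_left (show 0 < Bc.2.length from hkk ▸ hk1) hle

/-- If `g ≠ h` are marked morphisms of `A*` into itself with
`g(aˢbu) = h(aˢbu)` and `g(aʳbv) = h(a^q b v)` for positive `s, r, q`, then `s = r = q`. -/
theorem stmt_16 (g h : Ltr → List Ltr) (hg : Marked g) (hh : Marked h) (hgh : g ≠ h)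
    (u v : List Ltr) (s r q : ℕ) (hs : 0 < s) (hr : 0 < r) (hq : 0 < q)
    (e1 : mapp g (List.replicate s Ltr.a ++ Ltr.b :: u) =
          mapp h (List.replicate s Ltr.a ++ Ltr.b :: u))
    (e2 : mapp g (List.replicate r Ltr.a ++ Ltr.b :: v) =
          mapp h (List.replicate q Ltr.a ++ Ltr.b :: v)) :
    s = r ∧ r = q := by
  obtain ⟨hga, hgb, hgm⟩ := hg
  obtain ⟨hha, hhb, hhm⟩ := hh
  exact stmt_16' g h hga hgb hgm hha hhb hhm hgh u v s r q hs hr hq e1 e2
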